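/- Let (X, ≤) be a totally ordered set and let {A_x : x ∈ X} be an indexed family of totally ordered sets each with least element ⊥ and greatest element ⊤. Then the set of antichain labelings in ∏_{x∈X} A_x is totally ordered by the pointwise order: for any two antichain labelings f and g, either f(x) ≤ g(x) for all x ∈ X, or g(x) ≤ f(x) for all x ∈ X. (Hence a poset product of chains indexed by a chain is again a chain.) -/
import Mathlib

/-- A poset product of chains indexed by a chain is a chain: if `(X, ≤)` is
totally ordered and each `A x` is totally ordered with least element `⊥` and
greatest element `⊤`, then any two antichain labelings `f, g` are comparable
in the pointwise order. -/
theorem acLabelings_totally_ordered {X : Type*} [LinearOrder X]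
    {A : X → Type*} [∀ x, LinearOrder (A x)] [∀ x, OrderBot (A x)] [∀ x, OrderTop (A x)]
    (f g : ∀ x, A x)
    (hf : ∀ x y : X, x < y → f x = ⊥ ∨ f y = ⊤)
    (hg : ∀ x y : X, x < y → g x = ⊥ ∨ g y = ⊤) :
    (∀ x, f x ≤ g x) ∨ (∀ x, g x ≤ f x) := by
  by_contra h
  push_neg at h
  obtain ⟨⟨x, hx⟩, ⟨y, hy⟩⟩ := h
  rcases lt_trichotomy x y with hxy | rfl | hyx
  · rcases hf x y hxy with h' | h'
    · exact absurd h' (ne_bot_of_gt hx)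
    · exact absurd (h' ▸ hy) (by simp)
  · exact absurd hy (not_lt_of_gt hx)
  · rcases hg y x hyx with h' | h'
    · exact absurd h' (ne_bot_of_gt hy)
    · exact absurd (h' ▸ hx) (by simp)
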